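/- For every d ≥ 2 coprime to m and every r with gcd(r,m)=1, letting h = λ_{r,m}(d) ∈ {0,…,d-1} be the residue with r + hm ≡ 0 (mod d), for all 0 ≤ k ≤ d-1 one has (q^r;q^m)_k / (q^m;q^m)_k ≡ (-1)^k q^{m·binom(k,2) - mhk} · qbinom(h, k; q^m) modulo Φ_d(q), as Φ_d(q)-integral rational functions. -/

import Mathlib

open Polynomial Finset

private lemma cyclo_dvd_X_pow_sub_X_pow (d : ℕ) (a b : ℕ)
    (hab : (d : ℤ) ∣ (a : ℤ) - (b : ℤ)) :
    Polynomial.cyclotomic d ℚ ∣ (X ^ a - X ^ b : Polynomial ℚ) := by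
  have key : ∀ a b : ℕ, b ≤ a → (d : ℤ) ∣ (a : ℤ) - (b : ℤ) →
      Polynomial.cyclotomic d ℚ ∣ (X ^ a - X ^ b : Polynomial ℚ) := by
    intro a b hba hdvd
    have h1 : (d : ℤ) ∣ ((a - b : ℕ) : ℤ) := by
      rwa [Nat.cast_sub hba]
    have h2 : d ∣ a - b := Int.ofNat_dvd.mp h1
    obtain ⟨t, ht⟩ := h2
    have ha : a = b + d * t := by omega
    have : (X ^ a - X ^ b : Polynomial ℚ) = X ^ b * ((X ^ d) ^ t - 1 ^ t) := by
      rw [ha, pow_add, pow_mul]; ring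
    rw [this]
    exact Dvd.dvd.mul_left
      ((cyclotomic.dvd_X_pow_sub_one d ℚ).trans (by simpa using sub_dvd_pow_sub_pow (X ^ d : Polynomial ℚ) 1 t)) _
  rcases le_total b a with hba | hab'
  · exact key a b hba hab
  · have := key b a hab' (by simpa [neg_sub] using hab.neg_right)
    have : Polynomial.cyclotomic d ℚ ∣ -(X ^ b - X ^ a : Polynomial ℚ) := this.neg_right
    simpa using this

private lemma dvd_prod_sub_prod {ι : Type*} (p : Polynomial ℚ) (s : Finset ι)
    (f g : ι → Polynomial ℚ) (hfg : ∀ i ∈ s, p ∣ f i - g i) :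
    p ∣ (∏ i ∈ s, f i) - (∏ i ∈ s, g i) := by
  classical
  induction s using Finset.induction_on with
  | empty => simp
  | @insert x s hx ih =>
    rw [Finset.prod_insert hx, Finset.prod_insert hx]
    have h1 := hfg x (Finset.mem_insert_self x s)
    have h2 := ih fun i hi => hfg i (Finset.mem_insert_of_mem hi)
    have : f x * ∏ i ∈ s, f i - g x * ∏ i ∈ s, g i
        = f x * ((∏ i ∈ s, f i) - ∏ i ∈ s, g i) + (f x - g x) * ∏ i ∈ s, g i := by ring
    rw [this]
    exact dvd_add (h2.mul_left _) (h1.mul_right _)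

theorem qPoch_ratio_congr_qbinom (d m : ℕ) (r : ℤ) (hd : 2 ≤ d) (hm : 0 < m)
    (hdm : Nat.Coprime d m) (hrm : Int.gcd r m = 1) (h : ℕ) (hh : h < d)
    (hdvd : (d : ℤ) ∣ r + (h : ℤ) * m) (k : ℕ) (hk : k ≤ d - 1) :
    ∃ a b : Polynomial ℚ, ¬ Polynomial.cyclotomic d ℚ ∣ b ∧
      ((∏ j ∈ Finset.range k, (1 - (RatFunc.X : RatFunc ℚ) ^ (r + (j : ℤ) * m)))
          / (∏ j ∈ Finset.range k, (1 - (RatFunc.X : RatFunc ℚ) ^ ((m : ℤ) * (j + 1))))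
        - (-1) ^ k
            * (RatFunc.X : RatFunc ℚ) ^ ((m : ℤ) * (Nat.choose k 2) - (m : ℤ) * h * k)
            * ((∏ i ∈ Finset.range k,
                  (1 - ((RatFunc.X : RatFunc ℚ) ^ (m : ℤ)) ^ ((h : ℤ) - k + 1 + i)))
                / (∏ i ∈ Finset.range k,
                  (1 - ((RatFunc.X : RatFunc ℚ) ^ (m : ℤ)) ^ ((i : ℤ) + 1)))))
          * algebraMap (Polynomial ℚ) (RatFunc ℚ) b
        = algebraMap (Polynomial ℚ) (RatFunc ℚ) (Polynomial.cyclotomic d ℚ * a) := by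
  classical
  set Xr : RatFunc ℚ := RatFunc.X with hXr
  have hX : Xr ≠ 0 := RatFunc.X_ne_zero
  set alg := algebraMap (Polynomial ℚ) (RatFunc ℚ) with halg
  -- basic zpow/prod lemma
  have zpow_sum : ∀ (s : Finset ℕ) (e : ℕ → ℤ),
      Xr ^ (∑ j ∈ s, e j) = ∏ j ∈ s, Xr ^ e j := by
    intro s e
    induction s using Finset.cons_induction with
    | empty => simp
    | cons x s hx ih => rw [Finset.sum_cons, Finset.prod_cons, zpow_add₀ hX, ih]
  set C : ℕ := r.natAbs + m * h with hC
  have hCcast : (C : ℤ) = (r.natAbs : ℤ) + (m : ℤ) * (h : ℤ) := by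
    rw [hC]; push_cast; ring
  have hCa : ∀ j : ℕ, (0 : ℤ) ≤ (C : ℤ) + (r + (j : ℤ) * m) := by
    intro j
    have h1 : -(r.natAbs : ℤ) ≤ r := by
      rcases Int.natAbs_eq r with h1 | h1 <;> omega
    have h2 : (0:ℤ) ≤ (m : ℤ) * (h : ℤ) := by positivity
    have h3 : (0:ℤ) ≤ (j : ℤ) * (m : ℤ) := by positivity
    rw [hCcast]; linarith
  have hCb : ∀ j : ℕ, (0 : ℤ) ≤ (C : ℤ) + (m : ℤ) * ((j : ℤ) - (h : ℤ)) := by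
    intro j
    have heq : (C : ℤ) + (m : ℤ) * ((j : ℤ) - (h : ℤ)) = (r.natAbs : ℤ) + (m : ℤ) * (j : ℤ) := by
      rw [hCcast]; ring
    rw [heq]; positivity
  set af : ℕ → ℕ := fun j => ((C : ℤ) + (r + (j : ℤ) * m)).toNat with haf
  set bf : ℕ → ℕ := fun j => ((C : ℤ) + (m : ℤ) * ((j : ℤ) - (h : ℤ))).toNat with hbf
  have hafc : ∀ j : ℕ, ((af j : ℤ)) = (C : ℤ) + (r + (j : ℤ) * m) := fun j =>
    Int.toNat_of_nonneg (hCa j)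
  have hbfc : ∀ j : ℕ, ((bf j : ℤ)) = (C : ℤ) + (m : ℤ) * ((j : ℤ) - (h : ℤ)) := fun j =>
    Int.toNat_of_nonneg (hCb j)
  set P1 : Polynomial ℚ := ∏ j ∈ Finset.range k, (X ^ C - X ^ (af j)) with hP1
  set P2 : Polynomial ℚ := ∏ j ∈ Finset.range k, (X ^ C - X ^ (bf j)) with hP2
  set Dp : Polynomial ℚ := ∏ j ∈ Finset.range k, (1 - X ^ (m * (j + 1))) with hDp
  set Φ : Polynomial ℚ := Polynomial.cyclotomic d ℚ with hΦdef
  have hd0 : 0 < d := by omega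
  -- Φ divides P1 - P2
  have hdiffdvd : Φ ∣ P1 - P2 := by
    apply dvd_prod_sub_prod
    intro j _
    have : (X ^ C - X ^ (af j)) - (X ^ C - X ^ (bf j)) = (X ^ (bf j) - X ^ (af j) : Polynomial ℚ) := by
      ring
    rw [this]
    apply cyclo_dvd_X_pow_sub_X_pow
    rw [hbfc j, hafc j]
    have : (C : ℤ) + (m : ℤ) * ((j : ℤ) - (h : ℤ)) - ((C : ℤ) + (r + (j : ℤ) * m))
        = -(r + (h : ℤ) * m) := by ring
    rw [this]
    exact hdvd.neg_right
  obtain ⟨a, ha⟩ := hdiffdvd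
  refine ⟨a, X ^ (k * C) * Dp, ?_, ?_⟩
  · -- Φ does not divide X^(k*C) * Dp
    intro hcon
    have hζ := Complex.isPrimitiveRoot_exp d hd0.ne'
    set ζ : ℂ := Complex.exp (2 * Real.pi * Complex.I / d) with hζdef
    have hζ0 : ζ ≠ 0 := hζ.ne_zero hd0.ne'
    have hroot : (aeval ζ) Φ = 0 := by
      rw [hΦdef, aeval_def, ← eval_map, map_cyclotomic]
      exact hζ.isRoot_cyclotomic hd0
    obtain ⟨c, hc⟩ := hcon
    have h0 : (aeval ζ) (X ^ (k * C) * Dp) = 0 := by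
      rw [hc, map_mul, hroot, zero_mul]
    rw [map_mul, map_pow, aeval_X] at h0
    have h1 : (aeval ζ) Dp = 0 := by
      rcases mul_eq_zero.mp h0 with h' | h'
      · exact absurd h' (pow_ne_zero _ hζ0)
      · exact h'
    rw [hDp, map_prod] at h1
    obtain ⟨j, hj, hj0⟩ := Finset.prod_eq_zero_iff.mp h1
    simp only [map_sub, map_one, map_pow, aeval_X] at hj0
    have hζpow : ζ ^ (m * (j + 1)) = 1 := by linear_combination -hj0
    have hdvd' : d ∣ m * (j + 1) := (hζ.pow_eq_one_iff_dvd _).mp hζpow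
    have hdj : d ∣ j + 1 := hdm.dvd_of_dvd_mul_left hdvd'
    have : d ≤ j + 1 := Nat.le_of_dvd (by omega) hdj
    have hjk : j < k := Finset.mem_range.mp hj
    omega
  · -- the main equation
    -- names for the RatFunc quantities
    set A : RatFunc ℚ := ∏ j ∈ Finset.range k, (1 - Xr ^ (r + (j : ℤ) * m)) with hA
    set Dr : RatFunc ℚ := ∏ j ∈ Finset.range k, (1 - Xr ^ ((m : ℤ) * ((j : ℤ) + 1))) with hDr
    set B : RatFunc ℚ := ∏ j ∈ Finset.range k, (1 - Xr ^ ((m : ℤ) * ((j : ℤ) - (h : ℤ)))) with hB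
    -- the qbinom denominator equals Dr
    have hDq : (∏ i ∈ Finset.range k, (1 - (Xr ^ (m : ℤ)) ^ ((i : ℤ) + 1))) = Dr := by
      refine Finset.prod_congr rfl fun i _ => ?_
      rw [← zpow_mul]
    -- the qbinom numerator times prefactor equals B
    have hBeq : (-1 : RatFunc ℚ) ^ k
        * Xr ^ ((m : ℤ) * (Nat.choose k 2) - (m : ℤ) * h * k)
        * (∏ i ∈ Finset.range k, (1 - (Xr ^ (m : ℤ)) ^ ((h : ℤ) - k + 1 + i))) = B := by
      have hrefl : (∏ i ∈ Finset.range k, (1 - (Xr ^ (m : ℤ)) ^ ((h : ℤ) - k + 1 + i)))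
          = ∏ j ∈ Finset.range k, (1 - Xr ^ ((m : ℤ) * ((h : ℤ) - (j : ℤ)))) := by
        rw [← Finset.prod_range_reflect (fun j => (1 - Xr ^ ((m : ℤ) * ((h : ℤ) - (j : ℤ))))) k]
        refine Finset.prod_congr rfl fun i hi => ?_
        have hik : i < k := Finset.mem_range.mp hi
        have : ((k - 1 - i : ℕ) : ℤ) = (k : ℤ) - 1 - (i : ℤ) := by
          push_cast [Nat.cast_sub (by omega : 1 + i ≤ k)]
          omega
        rw [this, ← zpow_mul]
        congr 1
        congr 1
        ring
      rw [hrefl]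
      have hfac : ∀ j : ℕ, (1 - Xr ^ ((m : ℤ) * ((j : ℤ) - (h : ℤ))))
          = (-(Xr ^ ((m : ℤ) * ((j : ℤ) - (h : ℤ))))) * (1 - Xr ^ ((m : ℤ) * ((h : ℤ) - (j : ℤ)))) := by
        intro j
        have : Xr ^ ((m : ℤ) * ((j : ℤ) - (h : ℤ))) * Xr ^ ((m : ℤ) * ((h : ℤ) - (j : ℤ))) = 1 := by
          rw [← zpow_add₀ hX]
          have : (m : ℤ) * ((j : ℤ) - (h : ℤ)) + (m : ℤ) * ((h : ℤ) - (j : ℤ)) = 0 := by ring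
          rw [this, zpow_zero]
        linear_combination -this
      have hsum : ∑ j ∈ Finset.range k, ((m : ℤ) * ((j : ℤ) - (h : ℤ)))
          = (m : ℤ) * (Nat.choose k 2) - (m : ℤ) * h * k := by
        rw [← Finset.mul_sum, Finset.sum_sub_distrib, Finset.sum_const, Finset.card_range]
        have hgauss : (∑ j ∈ Finset.range k, (j : ℤ)) = (Nat.choose k 2 : ℤ) := by
          rw [← Nat.cast_sum]
          norm_cast
          rw [Finset.sum_range_id, Nat.choose_two_right]
        rw [hgauss]
        ring
      have hneg : (∏ j ∈ Finset.range k, (-(Xr ^ ((m : ℤ) * ((j : ℤ) - (h : ℤ))))))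
          = (-1 : RatFunc ℚ) ^ k * ∏ j ∈ Finset.range k, Xr ^ ((m : ℤ) * ((j : ℤ) - (h : ℤ))) :=
        calc (∏ j ∈ Finset.range k, (-(Xr ^ ((m : ℤ) * ((j : ℤ) - (h : ℤ))))))
            = ∏ j ∈ Finset.range k, ((-1 : RatFunc ℚ) * Xr ^ ((m : ℤ) * ((j : ℤ) - (h : ℤ)))) :=
              Finset.prod_congr rfl fun j _ => by ring
          _ = (-1 : RatFunc ℚ) ^ k * ∏ j ∈ Finset.range k, Xr ^ ((m : ℤ) * ((j : ℤ) - (h : ℤ))) := by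
              rw [Finset.prod_mul_distrib, Finset.prod_const, Finset.card_range]
      have hcalc : (∏ j ∈ Finset.range k, (1 - Xr ^ ((m : ℤ) * ((j : ℤ) - (h : ℤ)))))
          = (-1 : RatFunc ℚ) ^ k * Xr ^ ((m : ℤ) * (Nat.choose k 2) - (m : ℤ) * h * k)
            * ∏ j ∈ Finset.range k, (1 - Xr ^ ((m : ℤ) * ((h : ℤ) - (j : ℤ)))) :=
        calc (∏ j ∈ Finset.range k, (1 - Xr ^ ((m : ℤ) * ((j : ℤ) - (h : ℤ)))))
            = ∏ j ∈ Finset.range k, ((-(Xr ^ ((m : ℤ) * ((j : ℤ) - (h : ℤ)))))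
                * (1 - Xr ^ ((m : ℤ) * ((h : ℤ) - (j : ℤ))))) :=
              Finset.prod_congr rfl fun j _ => hfac j
          _ = (∏ j ∈ Finset.range k, (-(Xr ^ ((m : ℤ) * ((j : ℤ) - (h : ℤ))))))
                * ∏ j ∈ Finset.range k, (1 - Xr ^ ((m : ℤ) * ((h : ℤ) - (j : ℤ)))) :=
              Finset.prod_mul_distrib
          _ = (-1 : RatFunc ℚ) ^ k * Xr ^ ((m : ℤ) * (Nat.choose k 2) - (m : ℤ) * h * k)
                * ∏ j ∈ Finset.range k, (1 - Xr ^ ((m : ℤ) * ((h : ℤ) - (j : ℤ)))) := by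
              rw [hneg, ← zpow_sum, hsum, mul_assoc]
      rw [hB, hcalc]
    -- algebraMap of Dp is Dr
    have halgDp : alg Dp = Dr := by
      rw [hDp, hDr, map_prod]
      refine Finset.prod_congr rfl fun j _ => ?_
      rw [map_sub, map_one, map_pow, RatFunc.algebraMap_X, ← hXr, ← zpow_natCast Xr (m * (j+1))]
      congr 1
      all_goals (push_cast; ring)
    have hDpne : Dp ≠ 0 := by
      intro h0
      have heval : Dp.eval 0 = 1 := by
        rw [hDp, eval_prod]
        refine Finset.prod_eq_one fun j _ => ?_
        rw [eval_sub, eval_one, eval_pow, eval_X, zero_pow (by positivity : m * (j+1) ≠ 0), sub_zero]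
      rw [h0] at heval
      simp at heval
    have hDrne : Dr ≠ 0 := by
      rw [← halgDp]
      intro h0
      exact hDpne (RatFunc.algebraMap_injective ℚ (by rwa [map_zero]))
    -- factor-wise polynomial realization
    have hfacmap : ∀ (e : ℤ) (n : ℕ), ((n : ℤ) = (C : ℤ) + e) →
        Xr ^ C * (1 - Xr ^ e) = alg (X ^ C - X ^ n) := by
      intro e n hn
      rw [map_sub, map_pow, map_pow, RatFunc.algebraMap_X, ← hXr,
        ← zpow_natCast Xr C, ← zpow_natCast Xr n, hn, zpow_add₀ hX]
      ring
    have hpowprod : Xr ^ (k * C) = ∏ _j ∈ Finset.range k, Xr ^ C := by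
      rw [Finset.prod_const, Finset.card_range, ← pow_mul, mul_comm]
    have hP1eq : Xr ^ (k * C) * A = alg P1 := by
      rw [hA, hP1, map_prod, hpowprod, ← Finset.prod_mul_distrib]
      exact Finset.prod_congr rfl fun j _ => hfacmap (r + (j : ℤ) * m) (af j) (hafc j)
    have hP2eq : Xr ^ (k * C) * B = alg P2 := by
      rw [hB, hP2, map_prod, hpowprod, ← Finset.prod_mul_distrib]
      exact Finset.prod_congr rfl fun j _ =>
        hfacmap ((m : ℤ) * ((j : ℤ) - (h : ℤ))) (bf j) (hbfc j)
    -- rewrite the middle term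
    have hmid : (-1 : RatFunc ℚ) ^ k
        * Xr ^ ((m : ℤ) * (Nat.choose k 2) - (m : ℤ) * h * k)
        * ((∏ i ∈ Finset.range k, (1 - (Xr ^ (m : ℤ)) ^ ((h : ℤ) - k + 1 + i)))
            / (∏ i ∈ Finset.range k, (1 - (Xr ^ (m : ℤ)) ^ ((i : ℤ) + 1)))) = B / Dr := by
      rw [hDq, ← mul_div_assoc, hBeq]
    rw [hmid, div_sub_div_same, map_mul, map_pow, RatFunc.algebraMap_X, ← hXr, halgDp]
    calc (A - B) / Dr * (Xr ^ (k * C) * Dr) = Xr ^ (k * C) * A - Xr ^ (k * C) * B := by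
          field_simp
      _ = alg (Polynomial.cyclotomic d ℚ * a) := by
          rw [hP1eq, hP2eq, ← map_sub, ha, hΦdef]
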